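/- The volume of the polytope {(x_1,…,x_n) ∈ [0,1]^n : x_1 < x_2 > x_3 < x_4 > ⋯} (alternating inequalities) equals A_n/n!, where A_n is the n-th zigzag number; equivalently, the number of alternating (up-down) permutations of {1,…,n} is A_n. -/

import Mathlib

open MeasureTheory

/-- Euler zigzag numbers, as the Taylor coefficients at `0` of `sec z + tan z`. -/
noncomputable def zigzag (n : ℕ) : ℝ :=
  iteratedDeriv n (fun z : ℝ => (1 + Real.sin z) / Real.cos z) 0

open Real Filter Set Function
open scoped ENNReal

/-- Alternation pattern: ascent at index `i` iff `i % 2 = r % 2`. -/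
def AltP (r : ℕ) {m : ℕ} {α : Type*} [LT α] (x : Fin m → α) : Prop :=
  ∀ i : ℕ, (h : i + 1 < m) →
    if i % 2 = r % 2 then x ⟨i, Nat.lt_of_succ_lt h⟩ < x ⟨i + 1, h⟩ else x ⟨i + 1, h⟩ < x ⟨i, Nat.lt_of_succ_lt h⟩

/-- number of up-down permutations -/
noncomputable def zcount (k : ℕ) : ℕ := Nat.card {σ : Equiv.Perm (Fin k) // AltP 0 ⇑σ}

lemma altP_comp {α β : Type*} [LT α] [LT β] {m : ℕ} {g : α → β}
    (hg : ∀ a b, g a < g b ↔ a < b) (x : Fin m → α) (r : ℕ) :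
    AltP r (fun i => g (x i)) ↔ AltP r x := by
  unfold AltP
  refine forall_congr' fun i => forall_congr' fun h => ?_
  split <;> rw [hg]

lemma altP_mod {α : Type*} [LT α] {m : ℕ} {x : Fin m → α} {r s : ℕ} (hrs : r % 2 = s % 2) :
    AltP r x ↔ AltP s x := by
  unfold AltP
  simp only [hrs]

lemma altP_dual {α : Type*} [LT α] {m : ℕ} {x : Fin m → α} (r : ℕ) :
    AltP r x ↔ AltP (r + 1) (fun i => OrderDual.toDual (x i)) := by
  unfold AltP
  refine forall_congr' fun i => forall_congr' fun h => ?_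
  by_cases hc : i % 2 = r % 2
  · rw [if_pos hc, if_neg (by omega)]
    exact Iff.rfl
  · rw [if_neg hc, if_pos (by omega)]
    exact Iff.rfl

lemma card_words_post {α β : Type*} [LT α] [LT β] (e : α ≃ β)
    (he : ∀ a b, e a < e b ↔ a < b) (k r : ℕ) :
    Nat.card {f : Fin k → α // Function.Injective f ∧ AltP r f} =
      Nat.card {f : Fin k → β // Function.Injective f ∧ AltP r f} := by
  have he' : ∀ a b : β, e.symm a < e.symm b ↔ a < b := by
    intro a b
    rw [← he, e.apply_symm_apply, e.apply_symm_apply]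
  refine Nat.card_congr ⟨fun f => ⟨fun i => e (f.1 i), e.injective.comp f.2.1,
      (altP_comp he f.1 r).mpr f.2.2⟩,
    fun g => ⟨fun i => e.symm (g.1 i), e.symm.injective.comp g.2.1,
      (altP_comp he' g.1 r).mpr g.2.2⟩, ?_, ?_⟩
  · intro f; ext i; simp
  · intro g; ext i; simp

lemma card_words_dual {α : Type*} [LT α] (k r : ℕ) :
    Nat.card {f : Fin k → α // Function.Injective f ∧ AltP r f} =
      Nat.card {f : Fin k → αᵒᵈ // Function.Injective f ∧ AltP (r + 1) f} := by
  refine Nat.card_congr ⟨fun f => ⟨fun i => OrderDual.toDual (f.1 i),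
      OrderDual.toDual.injective.comp f.2.1, ((altP_dual r).mp f.2.2)⟩,
    fun g => ⟨fun i => OrderDual.ofDual (g.1 i),
      OrderDual.ofDual.injective.comp g.2.1, ?_⟩, fun f => rfl, fun g => rfl⟩
  have := (altP_dual (x := fun i => OrderDual.ofDual (g.1 i)) r).symm
  exact this.mp g.2.2

lemma card_perm_words (k r : ℕ) :
    Nat.card {f : Fin k → Fin k // Function.Injective f ∧ AltP r f} =
      Nat.card {σ : Equiv.Perm (Fin k) // AltP r ⇑σ} := by
  refine Nat.card_congr ⟨fun f =>
      ⟨Equiv.ofBijective f.1 ((Finite.injective_iff_bijective).mp f.2.1), f.2.2⟩,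
    fun σ => ⟨⇑σ.1, σ.1.injective, σ.2⟩, fun f => Subtype.ext rfl,
    fun σ => Subtype.ext (Equiv.ext fun x => rfl)⟩

/-- M1: the number of injective alternating (pattern `r`) words of length `k`
into any linear order of cardinality `k` is `zcount k`. -/
lemma card_words_eq_zcount {α : Type*} [LinearOrder α] [Fintype α] {k : ℕ}
    (hk : Fintype.card α = k) (r : ℕ) :
    Nat.card {f : Fin k → α // Function.Injective f ∧ AltP r f} = zcount k := by
  have base : ∀ (β : Type) [LinearOrder β] [Fintype β], Fintype.card β = k →
      Nat.card {f : Fin k → β // Function.Injective f ∧ AltP 0 f} = zcount k := by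
    intro β _ _ hβ
    have φ := monoEquivOfFin β hβ
    rw [card_words_post φ.symm.toEquiv (fun a b => φ.symm.lt_iff_lt) k 0, card_perm_words]
    rfl
  -- reduce α to a `Type 0` copy via `Fin k`
  have φ := monoEquivOfFin α hk
  rw [card_words_post φ.symm.toEquiv (fun a b => φ.symm.lt_iff_lt) k r]
  rcases Nat.mod_two_eq_zero_or_one r with hr | hr
  · rw [Nat.card_congr (Equiv.subtypeEquivRight (q := fun f => Function.Injective f ∧ AltP 0 f)
      (fun f => and_congr Iff.rfl (altP_mod (by omega))))]
    exact base (Fin k) (Fintype.card_fin k)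
  · rw [card_words_dual k r,
      Nat.card_congr (Equiv.subtypeEquivRight (q := fun f => Function.Injective f ∧ AltP 0 f)
      (fun f => and_congr Iff.rfl (altP_mod (by omega))))]
    exact base (Fin k)ᵒᵈ ((Fintype.card_congr (OrderDual.ofDual (α := Fin k))).trans (Fintype.card_fin k))

open Finset in
/-- M2 -/
lemma card_words_choose {α : Type*} [LinearOrder α] [Fintype α] {N : ℕ}
    (hN : Fintype.card α = N) (k r : ℕ) :
    Nat.card {f : Fin k → α // Function.Injective f ∧ AltP r f} = N.choose k * zcount k := by
  classical
  have hval : ∀ (S : Finset α) (a b : {x // x ∈ S}), (a : α) < b ↔ a < b :=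
    fun S a b => Subtype.coe_lt_coe
  set X := {f : Fin k → α // Function.Injective f ∧ AltP r f} with hX
  let φ : X → Finset α := fun f => Finset.univ.image f.1
  have h1 : Nat.card X = ∑ S : Finset α, Fintype.card {f : X // φ f = S} := by
    rw [← Nat.card_congr (Equiv.sigmaFiberEquiv φ), Nat.card_eq_fintype_card,
      Fintype.card_sigma]
  have h2 : ∀ S : Finset α, Fintype.card {f : X // φ f = S}
      = if S.card = k then zcount k else 0 := by
    intro S
    have hcard : ∀ f : X, (φ f).card = k := by
      intro f
      simp only [φ, Finset.card_image_of_injective _ f.2.1, Finset.card_univ, Fintype.card_fin]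
    by_cases hS : S.card = k
    · rw [if_pos hS, ← Nat.card_eq_fintype_card]
      have e : {f : X // φ f = S} ≃ {g : Fin k → {x // x ∈ S} // Function.Injective g ∧ AltP r g} := by
        refine ⟨fun f => ⟨fun i => ⟨f.1.1 i, ?_⟩, ?_, ?_⟩,
          fun g => ⟨⟨fun i => (g.1 i : α), Subtype.val_injective.comp g.2.1,
            (altP_comp (hval S) g.1 r).mpr g.2.2⟩, ?_⟩, fun f => ?_, fun g => ?_⟩
        · have : f.1.1 i ∈ φ f.1 := Finset.mem_image_of_mem _ (Finset.mem_univ i)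
          rwa [f.2] at this
        · intro i j hij
          exact f.1.2.1 (congrArg Subtype.val hij)
        · exact (altP_comp (hval S) _ r).mp f.1.2.2
        · refine Finset.eq_of_subset_of_card_le ?_ ?_
          · intro a ha
            rcases Finset.mem_image.mp ha with ⟨i, _, rfl⟩
            exact (g.1 i).2
          · rw [hS]
            have : (Finset.univ.image fun i => ((g.1 i : α))).card = k := by
              rw [Finset.card_image_of_injective _
                  (fun i j hij => g.2.1 (Subtype.val_injective hij)),
                Finset.card_univ, Fintype.card_fin]
            exact le_of_eq this.symm
        · refine Subtype.ext (Subtype.ext rfl)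
        · refine Subtype.ext (funext fun i => Subtype.ext rfl)
      rw [Nat.card_congr e]
      exact card_words_eq_zcount (by rw [Fintype.card_coe, hS]) r
    · rw [if_neg hS]
      rw [Fintype.card_eq_zero_iff]
      exact ⟨fun f => hS (f.2 ▸ hcard f.1)⟩
  rw [h1]
  simp only [h2]
  rw [Finset.sum_ite, Finset.sum_const, Finset.sum_const_zero, add_zero, smul_eq_mul]
  congr 1
  rw [← Fintype.card_subtype, ← hN]
  exact Fintype.card_finset_len k

section Splice

variable {n p : ℕ}

/-- Splicing a left word, the maximum, and a right word into a function on `Fin (n+1)`. -/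
def splice (hp : p ≤ n) (a : Fin p → {v : Fin (n+1) // v ≠ Fin.last n})
    (g : Fin (n - p) → {v : Fin (n+1) // v ≠ Fin.last n}) : Fin (n+1) → Fin (n+1) :=
  fun q =>
    if h1 : (q : ℕ) < p then (a ⟨q, h1⟩ : Fin (n+1))
    else if h2 : (q : ℕ) = p then Fin.last n
    else (g ⟨(q : ℕ) - (p + 1), by have := q.isLt; omega⟩ : Fin (n+1))

variable (hp : p ≤ n) (a : Fin p → {v : Fin (n+1) // v ≠ Fin.last n})
    (g : Fin (n - p) → {v : Fin (n+1) // v ≠ Fin.last n})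

lemma splice_lt {q : Fin (n+1)} (h1 : (q : ℕ) < p) : splice hp a g q = a ⟨q, h1⟩ :=
  dif_pos h1

lemma splice_eq {q : Fin (n+1)} (h : (q : ℕ) = p) : splice hp a g q = Fin.last n := by
  rw [splice, dif_neg (by omega), dif_pos h]

lemma splice_gt {q : Fin (n+1)} (h : p < (q : ℕ)) :
    splice hp a g q = g ⟨(q : ℕ) - (p + 1), by have := q.isLt; omega⟩ := by
  rw [splice, dif_neg (by omega), dif_neg (by omega)]

lemma splice_right (j : ℕ) (hj : j < n - p) :
    splice hp a g ⟨p + 1 + j, by omega⟩ = g ⟨j, hj⟩ := by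
  rw [splice_gt hp a g (q := ⟨p + 1 + j, by omega⟩) (by exact (show p < p + 1 + j by omega))]
  congr 1
  ext
  simp

lemma splice_injective (ha : Function.Injective a) (hg : Function.Injective g)
    (hag : ∀ i j, a i ≠ g j) : Function.Injective (splice hp a g) := by
  intro q r h
  have hq := q.isLt
  have hr := r.isLt
  rcases lt_trichotomy (q : ℕ) p with h1 | h1 | h1 <;>
    rcases lt_trichotomy (r : ℕ) p with h2 | h2 | h2
  · rw [splice_lt hp a g h1, splice_lt hp a g h2] at h
    have := ha (Subtype.val_injective h)
    rw [Fin.mk.injEq] at this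
    exact Fin.ext this
  · rw [splice_lt hp a g h1, splice_eq hp a g h2] at h
    exact absurd h (a _).2
  · rw [splice_lt hp a g h1, splice_gt hp a g h2] at h
    exact absurd (Subtype.val_injective h) (hag _ _)
  · rw [splice_eq hp a g h1, splice_lt hp a g h2] at h
    exact absurd h.symm (a _).2
  · exact Fin.ext (h1.trans h2.symm)
  · rw [splice_eq hp a g h1, splice_gt hp a g h2] at h
    exact absurd h.symm (g _).2
  · rw [splice_gt hp a g h1, splice_lt hp a g h2] at h
    exact absurd (Subtype.val_injective h).symm (hag _ _)
  · rw [splice_gt hp a g h1, splice_eq hp a g h2] at h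
    exact absurd h (g _).2
  · rw [splice_gt hp a g h1, splice_gt hp a g h2] at h
    have := hg (Subtype.val_injective h)
    rw [Fin.mk.injEq] at this
    exact Fin.ext (by omega)

lemma splice_altP (ha : AltP (p + 1) a) (hg : AltP 0 g) :
    AltP (p + 1) (splice hp a g) := by
  intro i h
  rcases lt_trichotomy (i + 1) p with hc | hc | hc
  · -- inside the left word
    have h2 := ha i hc
    by_cases hb : i % 2 = (p + 1) % 2
    · rw [if_pos hb] at h2 ⊢
      rw [splice_lt hp a g (q := ⟨i, by omega⟩) (by exact (show i < p by omega)),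
        splice_lt hp a g (q := ⟨i+1, h⟩) (by exact (show i + 1 < p by omega))]
      exact Subtype.coe_lt_coe.mpr h2
    · rw [if_neg hb] at h2 ⊢
      rw [splice_lt hp a g (q := ⟨i, by omega⟩) (by exact (show i < p by omega)),
        splice_lt hp a g (q := ⟨i+1, h⟩) (by exact (show i + 1 < p by omega))]
      exact Subtype.coe_lt_coe.mpr h2
  · -- ascent into the maximum
    rw [if_pos (by omega)]
    rw [splice_lt hp a g (q := ⟨i, by omega⟩) (by exact (show i < p by omega)),
      splice_eq hp a g (q := ⟨i+1, h⟩) (by exact (show i + 1 = p by omega))]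
    exact lt_of_le_of_ne (Fin.le_last _) (a _).2
  · -- at or after the maximum
    rcases Nat.eq_or_lt_of_le hc with hc' | hc'
    · -- descent out of the maximum
      rw [if_neg (by omega)]
      rw [splice_eq hp a g (q := ⟨i, by omega⟩) (by exact (show i = p by omega)),
        splice_gt hp a g (q := ⟨i+1, h⟩) (by exact (show p < i + 1 by omega))]
      exact lt_of_le_of_ne (Fin.le_last _) (g _).2
    · -- inside the right word
      obtain ⟨j, rfl⟩ : ∃ j, i = p + 1 + j := ⟨i - (p+1), by omega⟩
      have hj1 : j + 1 < n - p := by omega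
      have e1 : (⟨p + 1 + j + 1, h⟩ : Fin (n+1)) = ⟨p + 1 + (j + 1), by omega⟩ := by
        ext; simp; omega
      have h2 := hg j hj1
      rw [splice_right hp a g j (by omega), e1, splice_right hp a g (j+1) hj1]
      by_cases hb : j % 2 = 0
      · rw [if_pos (by omega)]
        rw [if_pos (by omega)] at h2
        exact Subtype.coe_lt_coe.mpr h2
      · rw [if_neg (by omega)]
        rw [if_neg (by omega)] at h2
        exact Subtype.coe_lt_coe.mpr h2

end Splice

section CardD

variable {n p : ℕ}

/-- non-maximal values -/
abbrev Bt (n : ℕ) := {v : Fin (n + 1) // v ≠ Fin.last n}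

/-- permutations with pattern forced by a maximum at position `p` -/
abbrev DSub (n p : ℕ) (hp : p ≤ n) :=
  {σ : Equiv.Perm (Fin (n + 1)) // AltP (p + 1) ⇑σ ∧ σ ⟨p, by omega⟩ = Fin.last n}

/-- left words -/
abbrev AW (n p : ℕ) := {a : Fin p → Bt n // Function.Injective a ∧ AltP (p + 1) a}

lemma ne_last_of_ne (hp : p ≤ n) (σd : DSub n p hp) (q : Fin (n + 1)) (hq : (q : ℕ) ≠ p) :
    σd.1 q ≠ Fin.last n := by
  intro hcon
  have h9 := σd.1.injective (hcon.trans σd.2.2.symm)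
  apply hq
  exact congrArg Fin.val h9

lemma coe_word_altP {m : ℕ} {α : Type*} [Preorder α] {P : α → Prop} (x : Fin m → {v // P v})
    (r : ℕ) : AltP r (fun i => (x i : α)) ↔ AltP r x :=
  altP_comp (fun a b => Subtype.coe_lt_coe) x r

def ldMap (hp : p ≤ n) (σd : DSub n p hp) : AW n p :=
  ⟨fun i => ⟨σd.1 ⟨i, by have := i.isLt; omega⟩,
      ne_last_of_ne hp σd _ (by exact (show (i : ℕ) ≠ p from by have := i.isLt; omega))⟩, by
    intro i j hij
    have h9 := σd.1.injective (congrArg Subtype.val hij)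
    rw [Fin.mk.injEq] at h9
    exact Fin.ext h9, by
    intro i h
    have h2 := σd.2.1 i (by omega)
    by_cases hb : i % 2 = (p + 1) % 2
    · rw [if_pos hb] at h2 ⊢
      exact Subtype.mk_lt_mk.mpr h2
    · rw [if_neg hb] at h2 ⊢
      exact Subtype.mk_lt_mk.mpr h2⟩

def rW (hp : p ≤ n) (σd : DSub n p hp) : Fin (n - p) → Bt n := fun j =>
  ⟨σd.1 ⟨p + 1 + j, by have := j.isLt; omega⟩,
    ne_last_of_ne hp σd _ (by exact (show p + 1 + (j : ℕ) ≠ p from by omega))⟩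

lemma card_fiber (hp : p ≤ n) (a : AW n p) :
    Nat.card {σd : DSub n p hp // ldMap hp σd = a} =
      Nat.card {g : Fin (n - p) → {w : Bt n // w ∉ Set.range a.1} //
        Function.Injective g ∧ AltP 0 g} := by
  refine Nat.card_congr ⟨fun σf => ⟨fun j => ⟨rW hp σf.1 j, ?_⟩, ?_, ?_⟩,
    fun gw => ⟨⟨Equiv.ofBijective (splice hp a.1 (fun j => ↑(gw.1 j)))
      ((Finite.injective_iff_bijective).mp (splice_injective hp a.1 _ a.2.1
        (fun i j hij => gw.2.1 (Subtype.val_injective hij))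
        (fun i j hij => (gw.1 j).2 ⟨i, hij⟩))), ?_, ?_⟩, ?_⟩, ?_, ?_⟩
  · -- rW value not in range of a
    obtain ⟨σd, rfl⟩ := σf
    rintro ⟨i, hi⟩
    have h9 := σd.1.injective (congrArg Subtype.val hi)
    rw [Fin.mk.injEq] at h9
    have := i.isLt
    omega
  · -- injectivity of the right word
    intro i j hij
    have h9 := σf.1.1.injective (congrArg Subtype.val (congrArg Subtype.val hij))
    rw [Fin.mk.injEq] at h9
    exact Fin.ext (by omega)
  · -- right word is up-down
    intro j hj
    have h2 := σf.1.2.1 (p + 1 + j) (by omega)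
    by_cases hb : j % 2 = 0 % 2
    · rw [if_pos hb]
      rw [if_pos (by omega)] at h2
      exact Subtype.mk_lt_mk.mpr (Subtype.mk_lt_mk.mpr h2)
    · rw [if_neg hb]
      rw [if_neg (by omega)] at h2
      exact Subtype.mk_lt_mk.mpr (Subtype.mk_lt_mk.mpr h2)
  · -- spliced function has the right pattern
    refine splice_altP hp a.1 _ a.2.2 ?_
    exact (coe_word_altP (fun j => (gw.1 j : Bt n)) 0).mpr
      ((coe_word_altP gw.1 0).mpr gw.2.2)
  · -- spliced function sends p to the maximum
    exact splice_eq hp a.1 (fun j => ↑(gw.1 j)) rfl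
  · -- left word of the spliced permutation is a
    refine Subtype.ext (funext fun i => Subtype.ext ?_)
    show splice hp a.1 (fun j => ↑(gw.1 j)) ⟨(i : ℕ), by have := i.isLt; omega⟩ = ↑(a.1 i)
    rw [splice_lt hp a.1 _ (by exact i.isLt)]
  · -- left inverse
    rintro ⟨σd, hσ⟩
    refine Subtype.ext (Subtype.ext (Equiv.ext fun q => ?_))
    show splice hp a.1 _ q = σd.1 q
    rcases lt_trichotomy (q : ℕ) p with h1 | h1 | h1
    · rw [splice_lt hp a.1 _ h1, ← hσ]
      show σd.1 ⟨(q : ℕ), _⟩ = σd.1 q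
      exact congrArg σd.1 (Fin.ext rfl)
    · rw [splice_eq hp a.1 _ h1]
      have : q = (⟨p, by omega⟩ : Fin (n + 1)) := Fin.ext h1
      rw [this, σd.2.2]
    · rw [splice_gt hp a.1 _ h1]
      show σd.1 ⟨p + 1 + ((q : ℕ) - (p + 1)), _⟩ = σd.1 q
      refine congrArg σd.1 (Fin.ext ?_)
      show p + 1 + ((q : ℕ) - (p + 1)) = (q : ℕ)
      omega
  · -- right inverse
    rintro ⟨g, hg⟩
    refine Subtype.ext (funext fun j => Subtype.ext (Subtype.ext ?_))
    show splice hp a.1 (fun j' => ↑(g j')) ⟨p + 1 + (j : ℕ), by have := j.isLt; omega⟩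
      = ((g j : Bt n) : Fin (n + 1))
    rw [splice_right hp a.1 _ (j : ℕ) j.isLt]

lemma card_D (hp : p ≤ n) :
    Nat.card (DSub n p hp) = n.choose p * zcount p * zcount (n - p) := by
  classical
  have hBt : Fintype.card (Bt n) = n := by
    have h1 : Fintype.card {v : Fin (n+1) // v = Fin.last n} = 1 := Fintype.card_subtype_eq _
    have h2 := Fintype.card_subtype_compl (fun v : Fin (n+1) => v = Fin.last n)
    rw [h1, Fintype.card_fin] at h2
    exact h2
  have h1 : Nat.card (DSub n p hp)
      = ∑ a : AW n p, Nat.card {σd : DSub n p hp // ldMap hp σd = a} := by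
    rw [← Nat.card_congr (Equiv.sigmaFiberEquiv (ldMap hp)), Nat.card_eq_fintype_card,
      Fintype.card_sigma]
    exact Finset.sum_congr rfl fun a _ => Nat.card_eq_fintype_card.symm
  have h2 : ∀ a : AW n p, Nat.card {σd : DSub n p hp // ldMap hp σd = a} = zcount (n - p) := by
    intro a
    rw [card_fiber hp a]
    refine card_words_eq_zcount ?_ 0
    have hr : Fintype.card {w : Bt n // w ∈ Set.range a.1} = p := by
      have e := Equiv.ofInjective a.1 a.2.1
      rw [← Fintype.card_congr e, Fintype.card_fin]
    have h3 := Fintype.card_subtype_compl (fun w : Bt n => w ∈ Set.range a.1)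
    rw [hr, hBt] at h3
    exact h3
  rw [h1]
  simp only [h2]
  rw [Finset.sum_const, smul_eq_mul, Finset.card_univ]
  have h3 : Fintype.card (AW n p) = n.choose p * zcount p := by
    rw [← Nat.card_eq_fintype_card]
    exact card_words_choose hBt p (p + 1)
  rw [h3]

lemma altP_anti {α β : Type*} [LT α] [LT β] {m : ℕ} {g : α → β}
    (hg : ∀ a b, g a < g b ↔ b < a) (x : Fin m → α) (r : ℕ) :
    AltP r x ↔ AltP (r + 1) (fun i => g (x i)) := by
  unfold AltP
  refine forall_congr' fun i => forall_congr' fun h => ?_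
  by_cases hc : i % 2 = r % 2
  · rw [if_pos hc, if_neg (by omega), hg]
  · rw [if_neg hc, if_pos (by omega), hg]

lemma pattern_force {n : ℕ} {σ : Equiv.Perm (Fin (n+1))} {p : Fin (n+1)} {r : ℕ}
    (h : AltP r ⇑σ) (hσ : σ p = Fin.last n) : AltP ((p : ℕ) + 1) ⇑σ := by
  rcases Nat.eq_zero_or_pos n with rfl | hn
  · intro i hi
    omega
  · refine (altP_mod (show r % 2 = ((p : ℕ) + 1) % 2 from ?_)).mp h
    rcases lt_or_eq_of_le (Nat.lt_succ_iff.mp p.isLt) with hpn | hpn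
    · -- p < n : use the descent just after the maximum
      have h2 := h p (by omega)
      have hne : σ ⟨(p : ℕ) + 1, by omega⟩ ≠ Fin.last n := by
        intro hcon
        have h9 := σ.injective (hcon.trans hσ.symm)
        have h10 := congrArg Fin.val h9
        simp at h10
      have hlt : σ ⟨(p : ℕ) + 1, by omega⟩ < σ ⟨(p : ℕ), by omega⟩ := by
        have : σ ⟨(p : ℕ), by omega⟩ = Fin.last n := by
          rw [show (⟨(p : ℕ), by omega⟩ : Fin (n+1)) = p from Fin.ext rfl, hσ]
        rw [this]
        exact lt_of_le_of_ne (Fin.le_last _) hne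
      by_cases hb : (p : ℕ) % 2 = r % 2
      · rw [if_pos hb] at h2
        exact absurd h2 (lt_asymm hlt)
      · omega
    · -- p = n : use the ascent just before the maximum
      have h2 := h (n - 1) (by omega)
      have he : (⟨n - 1 + 1, by omega⟩ : Fin (n+1)) = p := Fin.ext (by simp; omega)
      rw [he] at h2
      by_cases hb : (n - 1) % 2 = r % 2
      · omega
      · rw [if_neg hb, hσ] at h2
        exact absurd h2 (not_lt.mpr (Fin.le_last _))

lemma zig_iff {n : ℕ} (σ : Equiv.Perm (Fin (n+1))) (p : Fin (n+1)) (hσ : σ p = Fin.last n) :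
    (AltP 0 ⇑σ ∨ AltP 1 ⇑σ) ↔ AltP ((p : ℕ) + 1) ⇑σ := by
  constructor
  · rintro (h | h) <;> exact pattern_force h hσ
  · intro h
    rcases Nat.mod_two_eq_zero_or_one ((p : ℕ) + 1) with hm | hm
    · exact Or.inl ((altP_mod (by omega)).mp h)
    · exact Or.inr ((altP_mod (by omega)).mp h)

lemma card_zig (n : ℕ) :
    Nat.card {σ : Equiv.Perm (Fin (n+1)) // AltP 0 ⇑σ ∨ AltP 1 ⇑σ}
      = ∑ p ∈ Finset.range (n+1), n.choose p * zcount p * zcount (n - p) := by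
  classical
  let φ : {σ : Equiv.Perm (Fin (n+1)) // AltP 0 ⇑σ ∨ AltP 1 ⇑σ} → Fin (n+1) :=
    fun σ => σ.1.symm (Fin.last n)
  have h1 : Nat.card {σ : Equiv.Perm (Fin (n+1)) // AltP 0 ⇑σ ∨ AltP 1 ⇑σ}
      = ∑ q : Fin (n+1), Nat.card {σf : _ // φ σf = q} := by
    rw [← Nat.card_congr (Equiv.sigmaFiberEquiv φ), Nat.card_eq_fintype_card,
      Fintype.card_sigma]
    exact Finset.sum_congr rfl fun q _ => Nat.card_eq_fintype_card.symm
  have h2 : ∀ q : Fin (n+1), Nat.card {σf : _ // φ σf = q}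
      = n.choose q * zcount q * zcount (n - q) := by
    intro q
    have hq : (q : ℕ) ≤ n := Nat.lt_succ_iff.mp q.isLt
    rw [← card_D hq]
    refine Nat.card_congr ⟨fun σf => ⟨σf.1.1, ?_, ?_⟩, fun σd => ⟨⟨σd.1, ?_⟩, ?_⟩, ?_, ?_⟩
    · have hσ : σf.1.1 q = Fin.last n := ((Equiv.symm_apply_eq _).mp σf.2).symm
      exact (zig_iff σf.1.1 q hσ).mp σf.1.2
    · have hσ : σf.1.1 q = Fin.last n := ((Equiv.symm_apply_eq _).mp σf.2).symm
      exact hσ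
    · refine (zig_iff σd.1 q ?_).mpr σd.2.1
      exact σd.2.2
    · show σd.1.symm (Fin.last n) = q
      rw [Equiv.symm_apply_eq]
      exact σd.2.2.symm
    · intro σf
      exact Subtype.ext (Subtype.ext rfl)
    · intro σd
      exact Subtype.ext rfl
  rw [h1]
  simp only [h2]
  exact Fin.sum_univ_eq_sum_range (fun q => n.choose q * zcount q * zcount (n - q)) (n + 1)

lemma card_A1 (m : ℕ) : Nat.card {σ : Equiv.Perm (Fin m) // AltP 1 ⇑σ} = zcount m := by
  have hrev : ∀ a b : Fin m, Fin.rev a < Fin.rev b ↔ b < a := fun a b => Fin.rev_lt_rev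
  refine Nat.card_congr ⟨fun σh => ⟨σh.1.trans Fin.revPerm, ?_⟩,
    fun σh => ⟨σh.1.trans Fin.revPerm, ?_⟩, ?_, ?_⟩
  · have := (altP_mod (show 2 % 2 = 0 % 2 by omega)).mp
      ((altP_anti hrev ⇑σh.1 1).mp σh.2)
    exact this
  · exact (altP_anti hrev ⇑σh.1 0).mp σh.2
  · intro σh
    refine Subtype.ext (Equiv.ext fun i => ?_)
    show Fin.rev (Fin.rev (σh.1 i)) = σh.1 i
    exact Fin.rev_rev _
  · intro σh
    refine Subtype.ext (Equiv.ext fun i => ?_)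
    show Fin.rev (Fin.rev (σh.1 i)) = σh.1 i
    exact Fin.rev_rev _

lemma card_inter (m : ℕ) :
    Nat.card {σ : Equiv.Perm (Fin m) // AltP 0 ⇑σ ∧ AltP 1 ⇑σ}
      = if m ≤ 1 then 1 else 0 := by
  by_cases hm : m ≤ 1
  · rw [if_pos hm]
    have e : {σ : Equiv.Perm (Fin m) // AltP 0 ⇑σ ∧ AltP 1 ⇑σ} ≃ Equiv.Perm (Fin m) :=
      Equiv.subtypeUnivEquiv (fun σ => ⟨fun i hi => by omega, fun i hi => by omega⟩)
    rw [Nat.card_congr e, Nat.card_eq_fintype_card, Fintype.card_perm, Fintype.card_fin]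
    interval_cases m <;> rfl
  · rw [if_neg hm]
    have : IsEmpty {σ : Equiv.Perm (Fin m) // AltP 0 ⇑σ ∧ AltP 1 ⇑σ} := by
      refine ⟨fun σh => ?_⟩
      have h0 := σh.2.1 0 (by omega)
      have h1 := σh.2.2 0 (by omega)
      rw [if_pos (by omega)] at h0
      rw [if_neg (by omega)] at h1
      exact absurd h0 (lt_asymm h1)
    exact Nat.card_of_isEmpty

lemma zcount_rec (n : ℕ) :
    2 * zcount (n + 1) = (if n = 0 then 1 else 0)
      + ∑ p ∈ Finset.range (n + 1), n.choose p * zcount p * zcount (n - p) := by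
  classical
  have key : zcount (n+1) + zcount (n+1)
      = Nat.card {σ : Equiv.Perm (Fin (n+1)) // AltP 0 ⇑σ ∨ AltP 1 ⇑σ}
        + Nat.card {σ : Equiv.Perm (Fin (n+1)) // AltP 0 ⇑σ ∧ AltP 1 ⇑σ} := by
    have hA0 : zcount (n+1)
        = (Finset.univ.filter (fun σ : Equiv.Perm (Fin (n+1)) => AltP 0 ⇑σ)).card := by
      rw [zcount, Nat.card_eq_fintype_card, Fintype.card_subtype]
    have hA1 : zcount (n+1)
        = (Finset.univ.filter (fun σ : Equiv.Perm (Fin (n+1)) => AltP 1 ⇑σ)).card := by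
      rw [← card_A1 (n+1), Nat.card_eq_fintype_card, Fintype.card_subtype]
    have hA01 : (Finset.univ.filter (fun σ : Equiv.Perm (Fin (n+1)) => AltP 0 ⇑σ)).card
        = (Finset.univ.filter (fun σ : Equiv.Perm (Fin (n+1)) => AltP 1 ⇑σ)).card :=
      hA0.symm.trans hA1
    rw [hA0]
    nth_rewrite 2 [hA01]
    rw [Nat.card_eq_fintype_card, Fintype.card_subtype,
      Nat.card_eq_fintype_card, Fintype.card_subtype]
    have := Finset.card_union_add_card_inter
      (Finset.univ.filter (fun σ : Equiv.Perm (Fin (n+1)) => AltP 0 ⇑σ))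
      (Finset.univ.filter (fun σ : Equiv.Perm (Fin (n+1)) => AltP 1 ⇑σ))
    rw [← Finset.filter_or, ← Finset.filter_and] at this
    omega
  rw [card_zig, card_inter] at key
  have : (if n + 1 ≤ 1 then 1 else 0) = (if n = 0 then 1 else 0) := by
    by_cases hn : n = 0 <;> simp [hn]
  rw [this] at key
  omega

lemma zcount_zero : zcount 0 = 1 := by
  have e : {σ : Equiv.Perm (Fin 0) // AltP 0 ⇑σ} ≃ Equiv.Perm (Fin 0) :=
    Equiv.subtypeUnivEquiv (fun σ => fun i hi => by omega)
  rw [zcount, Nat.card_congr e, Nat.card_eq_fintype_card, Fintype.card_perm, Fintype.card_fin]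
  rfl

end CardD

lemma smooth_top_of_enat {f : ℝ → ℝ} (h : ContDiff ℝ (⊤ : ℕ∞) f) (m : ℕ) :
    Differentiable ℝ (iteratedDeriv m f) :=
  h.differentiable_iteratedDeriv m (by exact_mod_cast WithTop.coe_lt_top m)

/-- convolution-sum algebra step for the Leibniz rule -/
lemma conv_step (u v : ℕ → ℝ) (n : ℕ) :
    ∑ k ∈ Finset.range (n + 1),
        (n.choose k : ℝ) * (u (k + 1) * v (n - k) + u k * v (n - k + 1))
      = ∑ k ∈ Finset.range (n + 2), ((n + 1).choose k : ℝ) * (u k * v (n + 1 - k)) := by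
  have L : ∑ k ∈ Finset.range (n + 1),
        (n.choose k : ℝ) * (u (k + 1) * v (n - k) + u k * v (n - k + 1))
      = (∑ k ∈ Finset.range (n + 1), (n.choose k : ℝ) * (u (k + 1) * v (n - k)))
        + ∑ k ∈ Finset.range (n + 1), (n.choose k : ℝ) * (u k * v (n + 1 - k)) := by
    rw [← Finset.sum_add_distrib]
    refine Finset.sum_congr rfl fun k hk => ?_
    have hk' : k ≤ n := by have := Finset.mem_range.mp hk; omega
    have : n - k + 1 = n + 1 - k := by omega
    rw [this]; ring
  have R1 : ∑ k ∈ Finset.range (n + 1), (n.choose k : ℝ) * (u k * v (n + 1 - k))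
      = (∑ k ∈ Finset.range n, (n.choose (k + 1) : ℝ) * (u (k + 1) * v (n - k)))
        + u 0 * v (n + 1) := by
    rw [Finset.sum_range_succ' (fun k => (n.choose k : ℝ) * (u k * v (n + 1 - k))) n]
    congr 1
    · refine Finset.sum_congr rfl fun k hk => ?_
      have : n + 1 - (k + 1) = n - k := by omega
      rw [this]
    · simp
  have R2 : ∑ k ∈ Finset.range (n + 2), ((n + 1).choose k : ℝ) * (u k * v (n + 1 - k))
      = (∑ k ∈ Finset.range (n + 1), ((n + 1).choose (k + 1) : ℝ) * (u (k + 1) * v (n - k)))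
        + u 0 * v (n + 1) := by
    rw [Finset.sum_range_succ' (fun k => ((n + 1).choose k : ℝ) * (u k * v (n + 1 - k))) (n + 1)]
    congr 1
    · refine Finset.sum_congr rfl fun k hk => ?_
      have : n + 1 - (k + 1) = n - k := by omega
      rw [this]
    · simp
  have R3 : ∑ k ∈ Finset.range (n + 1), ((n + 1).choose (k + 1) : ℝ) * (u (k + 1) * v (n - k))
      = (∑ k ∈ Finset.range (n + 1), (n.choose k : ℝ) * (u (k + 1) * v (n - k)))
        + ∑ k ∈ Finset.range n, (n.choose (k + 1) : ℝ) * (u (k + 1) * v (n - k)) := by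
    have : ∀ k, ((n + 1).choose (k + 1) : ℝ) = (n.choose k : ℝ) + (n.choose (k + 1) : ℝ) := by
      intro k; rw [Nat.choose_succ_succ]; push_cast; ring
    simp_rw [this, add_mul]
    rw [Finset.sum_add_distrib]
    congr 1
    rw [Finset.sum_range_succ, Nat.choose_succ_self]
    simp
  rw [L, R1, R2, R3]
  ring

lemma iteratedDeriv_mul_smooth {f g : ℝ → ℝ} (hf : ContDiff ℝ (⊤ : ℕ∞) f)
    (hg : ContDiff ℝ (⊤ : ℕ∞) g) (n : ℕ) (x : ℝ) :
    iteratedDeriv n (fun y => f y * g y) x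
      = ∑ k ∈ Finset.range (n + 1),
          (n.choose k : ℝ) * (iteratedDeriv k f x * iteratedDeriv (n - k) g x) := by
  induction n generalizing x with
  | zero => simp [iteratedDeriv_zero]
  | succ n ih =>
    rw [iteratedDeriv_succ]
    have hfun : iteratedDeriv n (fun y => f y * g y)
        = fun y => ∑ k ∈ Finset.range (n + 1),
            (n.choose k : ℝ) * (iteratedDeriv k f y * iteratedDeriv (n - k) g y) :=
      funext fun y => ih y
    rw [hfun]
    have hdf : ∀ k, Differentiable ℝ (iteratedDeriv k f) := smooth_top_of_enat hf
    have hdg : ∀ k, Differentiable ℝ (iteratedDeriv k g) := smooth_top_of_enat hg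
    rw [deriv_fun_sum (fun k hk => by
      exact (((hdf k).differentiableAt.mul (hdg (n - k)).differentiableAt).const_mul _))]
    have hterm : ∀ k ∈ Finset.range (n + 1),
        deriv (fun y => (n.choose k : ℝ) * (iteratedDeriv k f y * iteratedDeriv (n - k) g y)) x
          = (n.choose k : ℝ) * (iteratedDeriv (k + 1) f x * iteratedDeriv (n - k) g x
              + iteratedDeriv k f x * iteratedDeriv (n - k + 1) g x) := by
      intro k hk
      rw [deriv_const_mul (d := fun y => iteratedDeriv k f y * iteratedDeriv (n - k) g y) _ ((hdf k).differentiableAt.mul (hdg (n - k)).differentiableAt),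
        deriv_fun_mul (hdf k).differentiableAt (hdg (n - k)).differentiableAt,
        ← iteratedDeriv_succ, ← iteratedDeriv_succ]
    rw [Finset.sum_congr rfl hterm]
    exact conv_step (fun k => iteratedDeriv k f x) (fun k => iteratedDeriv k g x) n

lemma iteratedDeriv_const_mul' {F : ℝ → ℝ} (hF : ContDiff ℝ (⊤ : ℕ∞) F) (c : ℝ) (n : ℕ)
    (x : ℝ) : iteratedDeriv n (fun z => c * F z) x = c * iteratedDeriv n F x := by
  rw [← iteratedDerivWithin_univ, ← iteratedDerivWithin_univ]
  exact iteratedDerivWithin_const_mul (Set.mem_univ x) uniqueDiffOn_univ c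
    ((hF.of_le (by exact_mod_cast (le_top : (n:ℕ∞) ≤ ⊤))).contDiffWithinAt)

lemma iteratedDeriv_one_add (G : ℝ → ℝ) (n : ℕ) (x : ℝ) :
    iteratedDeriv n (fun z => 1 + G z) x = (if n = 0 then 1 else 0) + iteratedDeriv n G x := by
  cases n with
  | zero => simp [iteratedDeriv_zero]
  | succ n =>
    rw [if_neg (Nat.succ_ne_zero n), ← iteratedDerivWithin_univ, ← iteratedDerivWithin_univ,
      iteratedDerivWithin_const_add (Nat.succ_pos n),
      zero_add]

/-- smooth cutoff -/
noncomputable def zbump : ContDiffBump (0 : ℝ) := ⟨1, 3/2, one_pos, by norm_num⟩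

/-- smooth global modification of `sec + tan` -/
noncomputable def gsm : ℝ → ℝ := fun z => (zbump z) * ((1 + Real.sin z) / Real.cos z)

lemma cos_pos_of_abs_lt {y : ℝ} (hy : |y| < 3/2) : 0 < Real.cos y := by
  have hpi : (3:ℝ)/2 < π/2 := by
    have := Real.pi_gt_three
    linarith
  refine Real.cos_pos_of_mem_Ioo ⟨?_, ?_⟩
  · have := abs_lt.mp hy; linarith
  · have := abs_lt.mp hy; linarith

lemma gsm_smooth : ContDiff ℝ (⊤ : ℕ∞) gsm := by
  rw [contDiff_iff_contDiffAt]
  intro x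
  by_cases hx : |x| < π/2
  · refine (zbump.contDiff.contDiffAt).mul ?_
    have habs := abs_lt.mp hx
    exact ((contDiffAt_const.add Real.contDiff_sin.contDiffAt).div
      Real.contDiff_cos.contDiffAt
      (ne_of_gt (Real.cos_pos_of_mem_Ioo ⟨habs.1, habs.2⟩)))
  · have hopen : IsOpen ((Metric.closedBall (0:ℝ) (3/2))ᶜ) :=
      (Metric.isClosed_closedBall).isOpen_compl
    have hmem : x ∈ (Metric.closedBall (0:ℝ) (3/2))ᶜ := by
      simp only [Metric.mem_closedBall, Real.dist_eq, sub_zero, Set.mem_compl_iff, not_le]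
      push_neg at hx
      have := Real.pi_gt_three
      linarith
    have hev : gsm =ᶠ[nhds x] (fun _ => 0) := by
      filter_upwards [hopen.mem_nhds hmem] with y hy
      have : zbump y = 0 := by
        refine zbump.zero_of_le_dist ?_
        simp only [Metric.mem_closedBall, Real.dist_eq, sub_zero, Set.mem_compl_iff,
          not_le] at hy
        rw [Real.dist_eq, sub_zero]
        exact le_of_lt hy
      simp [gsm, this]
    exact (contDiffAt_const (c := (0:ℝ))).congr_of_eventuallyEq hev

lemma gsm_eventuallyEq : gsm =ᶠ[nhds (0:ℝ)] fun z => (1 + Real.sin z) / Real.cos z := by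
  filter_upwards [Metric.ball_mem_nhds (0:ℝ) one_pos] with y hy
  have : zbump y = 1 := by
    refine zbump.one_of_mem_closedBall ?_
    simp only [Metric.mem_ball, Real.dist_eq, sub_zero] at hy
    simp only [Metric.mem_closedBall, Real.dist_eq, sub_zero]
    exact le_of_lt hy
  simp [gsm, this]

lemma zigzag_eq_gsm (n : ℕ) : zigzag n = iteratedDeriv n gsm 0 :=
  (Filter.EventuallyEq.iteratedDeriv_eq n gsm_eventuallyEq).symm

lemma deriv_gsm_eventually : deriv gsm =ᶠ[nhds (0:ℝ)] fun y => (1 + gsm y * gsm y) / 2 := by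
  have hball : ∀ y ∈ Metric.ball (0:ℝ) 1, deriv gsm y = (1 + gsm y * gsm y) / 2 := by
    intro y hy
    have hy' : |y| < 1 := by simpa [Real.dist_eq] using hy
    have hcos : Real.cos y ≠ 0 := ne_of_gt (cos_pos_of_abs_lt (by linarith))
    have heq : gsm =ᶠ[nhds y] fun z => (1 + Real.sin z) / Real.cos z := by
      filter_upwards [Metric.isOpen_ball.mem_nhds hy] with z hz
      have : zbump z = 1 := by
        refine zbump.one_of_mem_closedBall ?_
        simp only [Metric.mem_ball, Real.dist_eq, sub_zero] at hz
        simp only [Metric.mem_closedBall, Real.dist_eq, sub_zero]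
        exact le_of_lt hz
      simp [gsm, this]
    have h1 : HasDerivAt (fun z => 1 + Real.sin z) (Real.cos y) y :=
      (Real.hasDerivAt_sin y).const_add 1
    have h2 : HasDerivAt Real.cos (-Real.sin y) y := Real.hasDerivAt_cos y
    have hdiv := h1.fun_div h2 hcos
    rw [heq.deriv_eq, hdiv.deriv]
    have hgy : gsm y = (1 + Real.sin y) / Real.cos y := heq.eq_of_nhds
    rw [hgy]
    have hsc := Real.sin_sq_add_cos_sq y
    field_simp
    ring_nf
    nlinarith [hsc]
  filter_upwards [Metric.ball_mem_nhds (0:ℝ) one_pos] with y hy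
  exact hball y hy

lemma zigzag_zero : zigzag 0 = 1 := by
  simp [zigzag, iteratedDeriv_zero]

lemma zigzag_rec (n : ℕ) :
    zigzag (n + 1) = ((if n = 0 then 1 else 0)
      + ∑ p ∈ Finset.range (n + 1), (n.choose p : ℝ) * (zigzag p * zigzag (n - p))) / 2 := by
  rw [zigzag_eq_gsm (n + 1), iteratedDeriv_succ']
  rw [Filter.EventuallyEq.iteratedDeriv_eq n deriv_gsm_eventually]
  have hrw : (fun y => (1 + gsm y * gsm y) / 2)
      = fun y => (1/2 : ℝ) * (1 + gsm y * gsm y) := funext fun y => by ring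
  rw [hrw, iteratedDeriv_const_mul' (contDiff_const.add (gsm_smooth.mul gsm_smooth)) _ n 0,
    iteratedDeriv_one_add, iteratedDeriv_mul_smooth gsm_smooth gsm_smooth n 0]
  have : ∀ k ∈ Finset.range (n + 1),
      (n.choose k : ℝ) * (iteratedDeriv k gsm 0 * iteratedDeriv (n - k) gsm 0)
        = (n.choose k : ℝ) * (zigzag k * zigzag (n - k)) := by
    intro k hk
    rw [← zigzag_eq_gsm, ← zigzag_eq_gsm]
  rw [Finset.sum_congr rfl this]
  ring

section Volume

variable (n : ℕ)

/-- order simplex associated to a permutation -/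
def OSimp (σ : Equiv.Perm (Fin n)) : Set (Fin n → ℝ) :=
  {x | (∀ i, x i ∈ Icc (0:ℝ) 1) ∧ StrictMono (x ∘ ⇑σ)}

def Cube : Set (Fin n → ℝ) := {x | ∀ i, x i ∈ Icc (0:ℝ) 1}

lemma measurable_cube : MeasurableSet (Cube n) := by
  have : Cube n = ⋂ i, (fun x : Fin n → ℝ => x i) ⁻¹' (Icc (0:ℝ) 1) := by
    ext x; simp [Cube, mem_iInter]
  rw [this]
  exact MeasurableSet.iInter fun i => (measurable_pi_apply i) measurableSet_Icc

lemma measurable_osimp (σ : Equiv.Perm (Fin n)) : MeasurableSet (OSimp n σ) := by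
  have : OSimp n σ = Cube n ∩ ⋂ (p : Fin n × Fin n), ⋂ (_ : p.1 < p.2),
      {x : Fin n → ℝ | x (σ p.1) < x (σ p.2)} := by
    ext x
    simp only [OSimp, Cube, mem_inter_iff, mem_setOf_eq, mem_iInter]
    constructor
    · rintro ⟨h1, h2⟩
      exact ⟨h1, fun p hp => h2 hp⟩
    · rintro ⟨h1, h2⟩
      exact ⟨h1, fun i j hij => h2 (i, j) hij⟩
  rw [this]
  refine (measurable_cube n).inter (MeasurableSet.iInter fun p => MeasurableSet.iInter fun _ => ?_)
  exact measurableSet_lt (measurable_pi_apply _) (measurable_pi_apply _)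

lemma volume_osimp_eq (σ : Equiv.Perm (Fin n)) :
    volume (OSimp n σ) = volume (OSimp n 1) := by
  have hT := volume_measurePreserving_piCongrLeft (fun _ : Fin n => ℝ) σ.symm
  have hpre : OSimp n σ
      = (MeasurableEquiv.piCongrLeft (fun _ : Fin n => ℝ) σ.symm) ⁻¹' (OSimp n 1) := by
    ext x
    have happ : ∀ i, (MeasurableEquiv.piCongrLeft (fun _ : Fin n => ℝ) σ.symm) x i
        = x (σ i) := by
      intro i
      simp [MeasurableEquiv.piCongrLeft, Equiv.piCongrLeft, Equiv.piCongrLeft']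
    simp only [OSimp, mem_preimage, mem_setOf_eq]
    constructor
    · rintro ⟨h1, h2⟩
      refine ⟨fun i => by rw [happ i]; exact h1 _, ?_⟩
      intro i j hij
      simp only [Equiv.Perm.coe_one, comp_apply, id_eq]
      rw [happ i, happ j]
      exact h2 hij
    · rintro ⟨h1, h2⟩
      refine ⟨fun i => ?_, ?_⟩
      · have := h1 (σ.symm i)
        rw [happ, Equiv.apply_symm_apply] at this
        exact this
      · intro i j hij
        have := h2 (a := i) (b := j) hij
        simp only [Equiv.Perm.coe_one, comp_apply, id_eq] at this
        rw [happ i, happ j] at this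
        exact this
  rw [hpre, MeasurePreserving.measure_preimage hT (measurable_osimp n 1).nullMeasurableSet]

lemma noninj_null :
    volume {x : Fin n → ℝ | ¬ Function.Injective x} = 0 := by
  have hsub : {x : Fin n → ℝ | ¬ Function.Injective x}
      ⊆ ⋃ (p : Fin n × Fin n), ⋃ (_ : p.1 ≠ p.2), {x : Fin n → ℝ | x p.1 = x p.2} := by
    intro x hx
    simp only [mem_setOf_eq, Function.Injective, not_forall] at hx
    obtain ⟨i, j, hij, hne⟩ := hx
    exact mem_iUnion.mpr ⟨(i, j), mem_iUnion.mpr ⟨hne, hij⟩⟩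
  refine measure_mono_null hsub (measure_iUnion_null fun p => ?_)
  by_cases hne : p.1 = p.2
  · have : (⋃ (_ : p.1 ≠ p.2), {x : Fin n → ℝ | x p.1 = x p.2}) = ∅ := by
      ext x; simp [hne]
    rw [this]
    exact measure_empty
  · refine measure_mono_null (iUnion_subset fun _ => subset_rfl) ?_
    let φ : (Fin n → ℝ) →ₗ[ℝ] ℝ :=
      (LinearMap.proj p.1 : (Fin n → ℝ) →ₗ[ℝ] ℝ) - (LinearMap.proj p.2 : (Fin n → ℝ) →ₗ[ℝ] ℝ)
    have hker : {x : Fin n → ℝ | x p.1 = x p.2} = (LinearMap.ker φ : Set (Fin n → ℝ)) := by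
      ext x
      simp [φ, LinearMap.mem_ker, sub_eq_zero]
    rw [hker]
    refine Measure.addHaar_submodule _ _ ?_
    intro htop
    have hmem : Pi.single p.1 (1:ℝ) ∈ LinearMap.ker φ := htop ▸ Submodule.mem_top
    rw [LinearMap.mem_ker] at hmem
    simp only [φ, LinearMap.sub_apply, LinearMap.proj_apply] at hmem
    rw [Pi.single_eq_same, Pi.single_eq_of_ne (Ne.symm hne)] at hmem
    norm_num at hmem

end Volume

section Volume2

variable (n : ℕ)

lemma osimp_subset_inj (σ : Equiv.Perm (Fin n)) :
    OSimp n σ ⊆ {x : Fin n → ℝ | Function.Injective x} := by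
  rintro x ⟨h1, h2⟩
  intro i j hij
  have : x (σ (σ.symm i)) = x (σ (σ.symm j)) := by
    rw [Equiv.apply_symm_apply, Equiv.apply_symm_apply]; exact hij
  have := h2.injective this
  have := congrArg σ this
  rwa [Equiv.apply_symm_apply, Equiv.apply_symm_apply] at this

lemma iUnion_osimp :
    (⋃ σ : Equiv.Perm (Fin n), OSimp n σ)
      = Cube n ∩ {x : Fin n → ℝ | Function.Injective x} := by
  ext x
  simp only [mem_iUnion, mem_inter_iff, mem_setOf_eq]
  constructor
  · rintro ⟨σ, hσ⟩
    exact ⟨hσ.1, osimp_subset_inj n σ hσ⟩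
  · rintro ⟨h1, h2⟩
    refine ⟨Tuple.sort x, h1, ?_⟩
    refine (Tuple.monotone_sort x).strictMono_of_injective ?_
    exact h2.comp (Tuple.sort x).injective

lemma osimp_disjoint : Pairwise (Function.onFun Disjoint (OSimp n)) := by
  intro σ τ hne
  rw [Function.onFun, Set.disjoint_left]
  rintro x ⟨h1, h2⟩ ⟨h1', h2'⟩
  apply hne
  have hinj : Function.Injective x := osimp_subset_inj n σ ⟨h1, h2⟩
  have hσ : ∀ i, x (σ i) = x (Tuple.sort x i) := by
    have := (Tuple.comp_sort_eq_comp_iff_monotone (f := x) (σ := σ)).mpr h2.monotone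
    exact fun i => congrFun this i
  have hτ : ∀ i, x (τ i) = x (Tuple.sort x i) := by
    have := (Tuple.comp_sort_eq_comp_iff_monotone (f := x) (σ := τ)).mpr h2'.monotone
    exact fun i => congrFun this i
  refine Equiv.ext fun i => ?_
  exact (hinj ((hσ i).trans (hτ i).symm)).trans rfl

lemma volume_cube : volume (Cube n) = 1 := by
  have : Cube n = Set.pi Set.univ (fun _ : Fin n => Icc (0:ℝ) 1) := by
    ext x
    simp only [Cube, mem_setOf_eq, Set.mem_pi, Set.mem_univ, true_implies]
  rw [this, volume_pi_pi]
  simp [Real.volume_Icc]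

lemma volume_osimp :
    volume (OSimp n 1) = ((n.factorial : ℝ≥0∞))⁻¹ := by
  have hsum : ∑' σ : Equiv.Perm (Fin n), volume (OSimp n σ)
      = volume (⋃ σ : Equiv.Perm (Fin n), OSimp n σ) :=
    (measure_iUnion (osimp_disjoint n) (measurable_osimp n)).symm
  rw [iUnion_osimp] at hsum
  have hconull : volume (Cube n ∩ {x : Fin n → ℝ | Function.Injective x})
      = volume (Cube n) := by
    have h0 : volume ({x : Fin n → ℝ | Function.Injective x}ᶜ) = 0 := by
      have : {x : Fin n → ℝ | Function.Injective x}ᶜ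
          = {x : Fin n → ℝ | ¬ Function.Injective x} := rfl
      rw [this]; exact noninj_null n
    exact measure_inter_conull h0
  rw [hconull, volume_cube] at hsum
  rw [tsum_fintype] at hsum
  have hconst : ∀ σ : Equiv.Perm (Fin n), volume (OSimp n σ) = volume (OSimp n 1) :=
    volume_osimp_eq n
  rw [Finset.sum_congr rfl (fun σ _ => hconst σ), Finset.sum_const, Finset.card_univ,
    Fintype.card_perm, Fintype.card_fin] at hsum
  have hfac0 : (n.factorial : ℝ≥0∞) ≠ 0 := by
    simp [Nat.factorial_ne_zero]
  have hfactop : (n.factorial : ℝ≥0∞) ≠ ⊤ := ENNReal.natCast_ne_top _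
  have := congrArg (fun z => ((n.factorial : ℝ≥0∞))⁻¹ * z) hsum
  simp only [nsmul_eq_mul] at this
  rw [← mul_assoc, ENNReal.inv_mul_cancel hfac0 hfactop, one_mul, mul_one] at this
  exact this

/-- the target set of the theorem -/
lemma volume_alt :
    volume {x : Fin n → ℝ | (∀ i, x i ∈ Icc (0:ℝ) 1) ∧ AltP 0 x}
      = (zcount n : ℝ≥0∞) * ((n.factorial : ℝ≥0∞))⁻¹ := by
  classical
  set T := {x : Fin n → ℝ | (∀ i, x i ∈ Icc (0:ℝ) 1) ∧ AltP 0 x} with hT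
  have key : ∀ (σ : Equiv.Perm (Fin n)) (x : Fin n → ℝ), x ∈ OSimp n σ →
      (AltP 0 x ↔ AltP 0 ⇑σ.symm) := by
    intro σ x hx
    have hiff := altP_comp (g := x ∘ ⇑σ) (fun a b => hx.2.lt_iff_lt) ⇑σ.symm 0
    have hfun : (fun i => (x ∘ ⇑σ) (σ.symm i)) = x :=
      funext fun i => congrArg x (σ.apply_symm_apply i)
    rw [hfun] at hiff
    exact hiff
  have hTint : T ∩ {x : Fin n → ℝ | Function.Injective x}
      = ⋃ σ : {σ : Equiv.Perm (Fin n) // AltP 0 ⇑σ.symm}, OSimp n σ.1 := by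
    ext x
    simp only [mem_inter_iff, mem_setOf_eq, mem_iUnion, hT]
    constructor
    · rintro ⟨⟨h1, h2⟩, hinj⟩
      have hx : x ∈ OSimp n (Tuple.sort x) := by
        refine ⟨h1, (Tuple.monotone_sort x).strictMono_of_injective
          (hinj.comp (Tuple.sort x).injective)⟩
      exact ⟨⟨Tuple.sort x, (key _ x hx).mp h2⟩, hx⟩
    · rintro ⟨⟨σ, hσ⟩, hx⟩
      exact ⟨⟨hx.1, (key σ x hx).mpr hσ⟩, osimp_subset_inj n σ hx⟩
  have hmeasT : MeasurableSet T := by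
    have : T = Cube n ∩ ⋂ (i : ℕ), ⋂ (h : i + 1 < n),
        {x : Fin n → ℝ | if i % 2 = 0 % 2 then x ⟨i, Nat.lt_of_succ_lt h⟩ < x ⟨i + 1, h⟩
          else x ⟨i + 1, h⟩ < x ⟨i, Nat.lt_of_succ_lt h⟩} := by
      ext x
      simp only [hT, mem_inter_iff, mem_setOf_eq, mem_iInter, Cube]
      constructor
      · rintro ⟨h1, h2⟩
        exact ⟨h1, fun i h => h2 i h⟩
      · rintro ⟨h1, h2⟩
        exact ⟨h1, fun i h => h2 i h⟩
    rw [this]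
    refine (measurable_cube n).inter (MeasurableSet.iInter fun i => MeasurableSet.iInter
      fun h => ?_)
    by_cases hb : i % 2 = 0 % 2
    · simp only [if_pos hb]
      exact measurableSet_lt (measurable_pi_apply _) (measurable_pi_apply _)
    · simp only [if_neg hb]
      exact measurableSet_lt (measurable_pi_apply _) (measurable_pi_apply _)
  have hconull : volume (T ∩ {x : Fin n → ℝ | Function.Injective x}) = volume T :=
    measure_inter_conull (noninj_null n)
  have hdisj : Pairwise (Function.onFun Disjoint
      (fun σ : {σ : Equiv.Perm (Fin n) // AltP 0 ⇑σ.symm} => OSimp n σ.1)) := by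
    intro σ τ hne
    exact osimp_disjoint n (fun hc => hne (Subtype.ext hc))
  rw [← hconull, hTint, measure_iUnion hdisj (fun σ => measurable_osimp n σ.1), tsum_fintype]
  rw [Finset.sum_congr rfl (fun σ _ => volume_osimp_eq n σ.1), Finset.sum_const,
    Finset.card_univ, volume_osimp]
  have hcard : Fintype.card {σ : Equiv.Perm (Fin n) // AltP 0 ⇑σ.symm} = zcount n := by
    rw [← Nat.card_eq_fintype_card]
    refine Nat.card_congr ⟨fun σh => ⟨σh.1.symm, σh.2⟩, fun σh => ⟨σh.1.symm, by
      simpa using σh.2⟩, fun σh => by simp, fun σh => by simp⟩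
  rw [hcard, nsmul_eq_mul]

end Volume2


lemma zigzag_eq_zcount (n : ℕ) : zigzag n = (zcount n : ℝ) := by
  induction n using Nat.strong_induction_on with
  | _ n ih =>
    match n with
    | 0 => rw [zigzag_zero, zcount_zero]; norm_num
    | (m + 1) =>
      rw [zigzag_rec m]
      have hsum : ∑ p ∈ Finset.range (m + 1), (m.choose p : ℝ) * (zigzag p * zigzag (m - p))
          = ((∑ p ∈ Finset.range (m + 1),
              m.choose p * zcount p * zcount (m - p) : ℕ) : ℝ) := by
        push_cast
        refine Finset.sum_congr rfl fun p hp => ?_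
        have hp' : p < m + 1 := Finset.mem_range.mp hp
        rw [ih p (by omega), ih (m - p) (by omega)]
        ring
      rw [hsum]
      have hrec := zcount_rec m
      by_cases hm : m = 0
      · rw [if_pos hm] at hrec
        rw [if_pos hm]
        have hc : 2 * ((zcount (m + 1) : ℕ) : ℝ)
            = 1 + ((∑ p ∈ Finset.range (m + 1),
                m.choose p * zcount p * zcount (m - p) : ℕ) : ℝ) := by
          exact_mod_cast hrec
        linarith
      · rw [if_neg hm, zero_add] at hrec
        rw [if_neg hm]
        have hc : 2 * ((zcount (m + 1) : ℕ) : ℝ)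
            = 0 + ((∑ p ∈ Finset.range (m + 1),
                m.choose p * zcount p * zcount (m - p) : ℕ) : ℝ) := by
          rw [zero_add]
          exact_mod_cast hrec
        linarith

lemma altP_even_iff {m : ℕ} {α : Type*} [LT α] (x : Fin m → α) :
    (∀ i : ℕ, (h : i + 1 < m) →
        if Even i then x ⟨i, Nat.lt_of_succ_lt h⟩ < x ⟨i + 1, h⟩ else x ⟨i + 1, h⟩ < x ⟨i, Nat.lt_of_succ_lt h⟩)
      ↔ AltP 0 x := by
  refine forall_congr' fun i => forall_congr' fun h => ?_
  exact iff_of_eq (if_congr (by rw [Nat.even_iff]) rfl rfl)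

theorem zigzag_alternating_volume_and_card (n : ℕ) :
    volume {x : Fin n → ℝ | (∀ i, x i ∈ Set.Icc (0 : ℝ) 1) ∧
        ∀ i : ℕ, (h : i + 1 < n) →
          if Even i then x ⟨i, by omega⟩ < x ⟨i + 1, h⟩
          else x ⟨i + 1, h⟩ < x ⟨i, by omega⟩}
      = ENNReal.ofReal (zigzag n / n.factorial) ∧
    (Nat.card {σ : Equiv.Perm (Fin n) // ∀ i : ℕ, (h : i + 1 < n) →
        if Even i then σ ⟨i, by omega⟩ < σ ⟨i + 1, h⟩
        else σ ⟨i + 1, h⟩ < σ ⟨i, by omega⟩} : ℝ) = zigzag n := by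
  constructor
  · have hset : {x : Fin n → ℝ | (∀ i, x i ∈ Set.Icc (0 : ℝ) 1) ∧
        ∀ i : ℕ, (h : i + 1 < n) →
          if Even i then x ⟨i, by omega⟩ < x ⟨i + 1, h⟩
          else x ⟨i + 1, h⟩ < x ⟨i, by omega⟩}
        = {x : Fin n → ℝ | (∀ i, x i ∈ Set.Icc (0 : ℝ) 1) ∧ AltP 0 x} := by
      ext x
      exact and_congr Iff.rfl (altP_even_iff x)
    rw [hset, volume_alt n, zigzag_eq_zcount n]
    have hfacpos : (0 : ℝ) < (n.factorial : ℝ) := by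
      exact_mod_cast n.factorial_pos
    rw [div_eq_mul_inv, ENNReal.ofReal_mul (by positivity),
      ENNReal.ofReal_inv_of_pos hfacpos, ENNReal.ofReal_natCast, ENNReal.ofReal_natCast]
  · have hcard : Nat.card {σ : Equiv.Perm (Fin n) // ∀ i : ℕ, (h : i + 1 < n) →
        if Even i then σ ⟨i, by omega⟩ < σ ⟨i + 1, h⟩
        else σ ⟨i + 1, h⟩ < σ ⟨i, by omega⟩} = zcount n := by
      refine Nat.card_congr (Equiv.subtypeEquivRight fun σ => ?_)
      exact altP_even_iff ⇑σ
    rw [hcard, zigzag_eq_zcount n]
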